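/- arXiv:1506.01138 — 7 statements merged into one kernel-verified Lean document; each statement's English description precedes it below -/
import Mathlib

section
/- Let $N, K, L$ be positive reals with $N > KL$, let $c > 0$, $c_1 > 0$, $c_2 > 0$, and $u > 0$ be reals. For each natural number $M \geq 1$ define $\gamma_M := c/\sqrt{M}$, $\sigma_{\omega}^2(M) := \frac{\frac{1}{\gamma_M}\left(\frac{KL}{N-KL} + \frac{1}{2K\gamma_M}\right)}{M (N-KL)(KL)^2}$, $x_M := \sigma_{\omega}^2(M)\, u^2$, and $\mathrm{SINR}(M) := \frac{e^{-x_M}}{(1 - e^{-x_M}) + \frac{1}{MK\gamma_M^2} + \frac{c_1}{M\gamma_M} + \frac{c_2}{M}}$. Then, with $\theta := \frac{1}{Kc^2}$ and $\alpha := \frac{u^2}{2(N-KL)(KL)^2}$, we have $\mathrm{SINR}(M) \to \frac{e^{-\alpha\theta}}{1 - e^{-\alpha\theta} + \theta}$ as $M \to \infty$. -/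
open Filter

/-- Limiting SINR underlying Remark 2 and the proof of Lemma 1: with received
SNR scaled as `γ_M = c/√M`, the per-user SINR of eq. (6) converges to the
positive constant `e^{-αθ}/(1 - e^{-αθ} + θ)` with `θ = 1/(Kc²)` and
`α = u²/(2(N-KL)(KL)²)`, showing an `O(√M)` array gain is achievable. -/
theorem stmt3 (N K L : ℝ) (hN : 0 < N) (hK : 0 < K) (hL : 0 < L)
    (hNKL : K * L < N) (c c₁ c₂ u : ℝ) (hc : 0 < c) (hc₁ : 0 < c₁)
    (hc₂ : 0 < c₂) (hu : 0 < u)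
    (γ : ℕ → ℝ) (hγ : ∀ M : ℕ, 1 ≤ M → γ M = c / Real.sqrt M)
    (σω2 : ℕ → ℝ)
    (hσω2 : ∀ M : ℕ, 1 ≤ M →
      σω2 M = ((1 / γ M) * ((K * L) / (N - K * L) + 1 / (2 * K * γ M))) /
        ((M : ℝ) * (N - K * L) * (K * L) ^ 2))
    (x : ℕ → ℝ) (hx : ∀ M : ℕ, 1 ≤ M → x M = σω2 M * u ^ 2)
    (SINR : ℕ → ℝ)
    (hSINR : ∀ M : ℕ, 1 ≤ M →
      SINR M = Real.exp (-(x M)) /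
        ((1 - Real.exp (-(x M))) + 1 / ((M : ℝ) * K * (γ M) ^ 2)
          + c₁ / ((M : ℝ) * γ M) + c₂ / (M : ℝ)))
    (θ α : ℝ) (hθ : θ = 1 / (K * c ^ 2))
    (hα : α = u ^ 2 / (2 * (N - K * L) * (K * L) ^ 2)) :
    Tendsto SINR atTop
      (nhds (Real.exp (-(α * θ)) / (1 - Real.exp (-(α * θ)) + θ))) := by
  have hNK : 0 < N - K * L := by linarith
  have hKL : 0 < K * L := mul_pos hK hL
  -- 1/√M → 0
  have hsq : Tendsto (fun M : ℕ => 1 / Real.sqrt M) atTop (nhds 0) := by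
    have h1 : Tendsto (fun M : ℕ => (1 : ℝ) / M) atTop (nhds 0) :=
      tendsto_one_div_atTop_nhds_zero_nat
    have h2 := (Real.continuous_sqrt.tendsto 0).comp h1
    rw [Real.sqrt_zero] at h2
    refine h2.congr fun M => ?_
    simp [Function.comp, one_div, Real.sqrt_inv]
  -- the constant in the 1/√M correction of x
  set A : ℝ := K * L * u ^ 2 / (c * (N - K * L) ^ 2 * (K * L) ^ 2) with hA
  -- x M = α*θ + A/√M eventually
  have hxeq : ∀ M : ℕ, 1 ≤ M → x M = α * θ + A * (1 / Real.sqrt M) := by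
    intro M hM
    have hM0 : (0 : ℝ) < M := by exact_mod_cast hM
    obtain ⟨s, hs0, hsM⟩ : ∃ s : ℝ, 0 < s ∧ (M : ℝ) = s ^ 2 :=
      ⟨Real.sqrt M, Real.sqrt_pos.mpr hM0, (Real.sq_sqrt hM0.le).symm⟩
    rw [hx M hM, hσω2 M hM, hγ M hM, hα, hθ, hA, hsM, Real.sqrt_sq hs0.le]
    field_simp
    ring
  have hxlim : Tendsto x atTop (nhds (α * θ)) := by
    have : Tendsto (fun M : ℕ => α * θ + A * (1 / Real.sqrt M)) atTop
        (nhds (α * θ + A * 0)) :=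
      tendsto_const_nhds.add (tendsto_const_nhds.mul hsq)
    rw [mul_zero, add_zero] at this
    refine this.congr' ?_
    filter_upwards [eventually_ge_atTop 1] with M hM
    exact (hxeq M hM).symm
  -- numerator limit
  have hnum : Tendsto (fun M => Real.exp (-(x M))) atTop
      (nhds (Real.exp (-(α * θ)))) :=
    (Real.continuous_exp.tendsto _).comp (hxlim.neg)
  -- SINR eventually equals a nicer expression
  have hSINR' : ∀ M : ℕ, 1 ≤ M →
      SINR M = Real.exp (-(x M)) /
        ((1 - Real.exp (-(x M))) + θ + c₁ / (c * Real.sqrt M) + c₂ / M) := by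
    intro M hM
    have hM0 : (0 : ℝ) < M := by exact_mod_cast hM
    obtain ⟨s, hs0, hsM⟩ : ∃ s : ℝ, 0 < s ∧ (M : ℝ) = s ^ 2 :=
      ⟨Real.sqrt M, Real.sqrt_pos.mpr hM0, (Real.sq_sqrt hM0.le).symm⟩
    rw [hSINR M hM, hγ M hM, hθ, hsM, Real.sqrt_sq hs0.le]
    congr 1
    field_simp
  -- denominator limit
  have hxθ : 0 < α * θ := by
    rw [hα, hθ]
    positivity
  have hden : Tendsto (fun M : ℕ =>
      (1 - Real.exp (-(x M))) + θ + c₁ / (c * Real.sqrt M) + c₂ / M) atTop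
      (nhds ((1 - Real.exp (-(α * θ))) + θ)) := by
    have h3 : Tendsto (fun M : ℕ => c₁ / (c * Real.sqrt M)) atTop (nhds 0) := by
      have : Tendsto (fun M : ℕ => (c₁ / c) * (1 / Real.sqrt M)) atTop
          (nhds ((c₁ / c) * 0)) := tendsto_const_nhds.mul hsq
      rw [mul_zero] at this
      refine this.congr fun M => ?_
      ring
    have h4 : Tendsto (fun M : ℕ => c₂ / (M : ℝ)) atTop (nhds 0) := by
      have : Tendsto (fun M : ℕ => c₂ * (1 / (M : ℝ))) atTop (nhds (c₂ * 0)) :=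
        tendsto_const_nhds.mul tendsto_one_div_atTop_nhds_zero_nat
      rw [mul_zero] at this
      refine this.congr fun M => by rw [mul_one_div]
    have h1 : Tendsto (fun _ : ℕ => (1 : ℝ)) atTop (nhds 1) := tendsto_const_nhds
    have h2 : Tendsto (fun _ : ℕ => θ) atTop (nhds θ) := tendsto_const_nhds
    have := (((h1.sub hnum).add h2).add h3).add h4
    simpa using this
  have hdne : (1 - Real.exp (-(α * θ))) + θ ≠ 0 := by
    have h1 : Real.exp (-(α * θ)) < 1 := by
      rw [Real.exp_lt_one_iff]
      linarith
    have hθpos : 0 < θ := by rw [hθ]; positivity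
    nlinarith
  have := hnum.div hden hdne
  refine this.congr' ?_
  filter_upwards [eventually_ge_atTop 1] with M hM
  exact (hSINR' M hM).symm
end

section
/- Let $R > 0$, $\alpha > 0$ be reals, let $\theta' > 0$ be the unique positive real satisfying $(1 + \theta')(1 - 2^{-R}) = e^{-\alpha\theta'}$, and set $\theta_0 := \frac{1}{2^R - 1}$. Then $\sqrt{\theta_0/\theta'} \leq \sqrt{1 + \alpha \cdot \frac{2^R}{2^R - 1}}$. -/
/-- Exact version of the asymptotic SNR-gap formula (eq. (7)): the gap
`√(θ₀/θ')` between the residual-CFO and zero-CFO scenarios is at most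
`√(1 + α·2^R/(2^R - 1))`. -/
theorem stmt8 (R α θ' : ℝ) (hR : 0 < R) (hα : 0 < α) (hθ' : 0 < θ')
    (heq : (1 + θ') * (1 - (2 : ℝ) ^ (-R)) = Real.exp (-(α * θ')))
    (θ₀ : ℝ) (hθ₀ : θ₀ = 1 / ((2 : ℝ) ^ R - 1)) :
    Real.sqrt (θ₀ / θ') ≤ Real.sqrt (1 + α * (2 : ℝ) ^ R / ((2 : ℝ) ^ R - 1)) := by
  set s : ℝ := (2 : ℝ) ^ R with hs
  have hs1 : 1 < s := Real.one_lt_rpow_iff_of_pos (by norm_num) |>.mpr (Or.inl ⟨by norm_num, hR⟩)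
  have hs0 : 0 < s := lt_trans one_pos hs1
  have hinv : (2 : ℝ) ^ (-R) = s⁻¹ := Real.rpow_neg (by norm_num) R
  have hexp : 1 - α * θ' ≤ (1 + θ') * (1 - s⁻¹) := by
    rw [← hinv, heq]
    linarith [Real.add_one_le_exp (-(α * θ'))]
  have hsi : s * s⁻¹ = 1 := mul_inv_cancel₀ (ne_of_gt hs0)
  have key : 1 ≤ θ' * (s - 1 + α * s) := by nlinarith [mul_le_mul_of_nonneg_left hexp (le_of_lt hs0)]
  apply Real.sqrt_le_sqrt
  rw [hθ₀, div_div, div_le_iff₀ (mul_pos (by linarith) hθ')]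
  have hne : s - 1 ≠ 0 := by linarith
  have h1 : (1 + α * s / (s - 1)) * ((s - 1) * θ') = θ' * (s - 1 + α * s) := by
    field_simp
  linarith [h1 ▸ key]
end

section
/- Let $\alpha > 0$ and $R \geq \log_2(1 + \alpha)$ be reals, and let $\theta' > 0$ be the unique positive real satisfying $(1 + \theta')(1 - 2^{-R}) = e^{-\alpha\theta'}$. Then $\alpha\,\theta' < 1$. -/
/-- Key intermediate step of Lemma 1: with desired rate `R ≥ log₂(1+α)`, the
solution `θ'` of the rate fixed-point equation satisfies `αθ' < 1`, which
justifies the linearization `e^{-αθ'} ≈ 1 - αθ'`. -/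
theorem stmt9 (α R θ' : ℝ) (hα : 0 < α) (hR : R ≥ Real.logb 2 (1 + α))
    (hθ' : 0 < θ')
    (heq : (1 + θ') * (1 - (2 : ℝ) ^ (-R)) = Real.exp (-(α * θ'))) :
    α * θ' < 1 := by
  set t := α * θ' with ht
  have htpos : 0 < t := mul_pos hα hθ'
  -- 2^R ≥ 1 + α
  have h2R : (1 + α : ℝ) ≤ (2 : ℝ) ^ R := by
    have := Real.rpow_logb (by norm_num : (0:ℝ) < 2) (by norm_num : (2:ℝ) ≠ 1)
      (by linarith : (0:ℝ) < 1 + α)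
    calc (1 + α : ℝ) = (2:ℝ) ^ Real.logb 2 (1 + α) := this.symm
      _ ≤ (2:ℝ) ^ R := Real.rpow_le_rpow_of_exponent_le (by norm_num) hR
  have h2Rpos : (0:ℝ) < (2:ℝ) ^ R := Real.rpow_pos_of_pos (by norm_num) R
  have hneg : (2:ℝ) ^ (-R) = ((2:ℝ) ^ R)⁻¹ := Real.rpow_neg (by norm_num) R
  have hle : (2:ℝ) ^ (-R) ≤ 1 / (1 + α) := by
    rw [hneg]
    rw [div_eq_inv_mul, mul_one]
    exact inv_anti₀ (by linarith) h2R
  -- e^{-t} < 1/(1+t)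
  have hexp : Real.exp (-t) < 1 / (1 + t) := by
    have h1 : t + 1 < Real.exp t := Real.add_one_lt_exp (ne_of_gt htpos)
    rw [Real.exp_neg]
    rw [inv_lt_iff_one_lt_mul₀ (Real.exp_pos t), div_mul_eq_mul_div,
      lt_div_iff₀ (by linarith)]
    linarith
  have key : (1 + θ') * (1 - 1 / (1 + α)) < 1 / (1 + t) := by
    calc (1 + θ') * (1 - 1 / (1 + α)) ≤ (1 + θ') * (1 - (2:ℝ) ^ (-R)) := by
          apply mul_le_mul_of_nonneg_left (by linarith) (by linarith)
      _ = Real.exp (-t) := heq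
      _ < 1 / (1 + t) := hexp
  have h1α : (0:ℝ) < 1 + α := by linarith
  have h1t : (0:ℝ) < 1 + t := by linarith
  have hsub : (1 - 1 / (1 + α)) = α / (1 + α) := by field_simp; ring
  rw [hsub, mul_div_assoc', div_lt_div_iff₀ h1α h1t] at key
  nlinarith [mul_pos hα hθ', sq_nonneg t]
end

section
/- Fix a real $R > 0$. For $\alpha > 0$ let $\theta'(\alpha)$ denote the unique positive real satisfying $(1 + \theta'(\alpha))(1 - 2^{-R}) = e^{-\alpha\,\theta'(\alpha)}$. Then $\theta'$ is strictly antitone: for all reals $0 < \alpha_1 < \alpha_2$, one has $\theta'(\alpha_2) < \theta'(\alpha_1)$. -/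
/-- For fixed rate `R > 0`, the solution `θ'(α)` of the rate fixed-point
equation is strictly antitone in the CFO parameter `α > 0`: the asymptotic SNR
gap `√(θ₀/θ'(α))` to the zero-CFO scenario strictly increases with `α`. -/
theorem stmt11 (R : ℝ) (hR : 0 < R) (θ' : ℝ → ℝ)
    (hθ' : ∀ α : ℝ, 0 < α → 0 < θ' α ∧
      (1 + θ' α) * (1 - (2 : ℝ) ^ (-R)) = Real.exp (-(α * θ' α))) :
    StrictAntiOn θ' (Set.Ioi (0 : ℝ)) := by
  intro a ha b hb hab
  simp only [Set.mem_Ioi] at ha hb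
  by_contra h
  push_neg at h
  obtain ⟨hap, hae⟩ := hθ' a ha
  obtain ⟨hbp, hbe⟩ := hθ' b hb
  have hc : (0:ℝ) < 1 - (2 : ℝ) ^ (-R) := by
    have : (2:ℝ) ^ (-R) < 1 :=
      Real.rpow_lt_one_of_one_lt_of_neg one_lt_two (by linarith)
    linarith
  have hle : Real.exp (-(a * θ' a)) ≤ Real.exp (-(b * θ' b)) := by
    rw [← hae, ← hbe]
    nlinarith
  have := Real.exp_le_exp.mp hle
  nlinarith
end

section
/- Let $N, K, k, t, R$ be positive reals with $K \geq 1$, $k \geq 1$, $R > 0$, and let $L_1, L_2$ be reals with $1 \leq L_1 < L_2 \leq \frac{N}{2K}$ and $t > (k-1)L_2$. For $i \in \{1,2\}$ define $\alpha_i := \frac{(t-(k-1)L_i)^2}{2(N-KL_i)(KL_i)^2}$ and let $\theta'_i > 0$ be the unique positive real satisfying $(1+\theta'_i)(1 - 2^{-R}) = e^{-\alpha_i \theta'_i}$, and set $\theta_0 := \frac{1}{2^R - 1}$. Then $\sqrt{\theta_0/\theta'_2} < \sqrt{\theta_0/\theta'_1}$. -/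
private lemma aux13 (N a b : ℝ) (ha : 0 < a) (hab : a < b) (hb : b ≤ N / 2) :
    a * a + a * b + b * b < N * (a + b) := by
  have h1 : a < N / 2 := hab.trans_le hb
  nlinarith [mul_lt_mul_of_pos_right h1 ha, mul_lt_mul_of_pos_right h1 (ha.trans hab),
    mul_le_mul_of_nonneg_right hb (ha.trans hab).le]


/-- Lemma 1: for a fixed per-user rate `R`, the asymptotic gap
`lim γ_k/γ_{k,0} = √(θ₀/θ')` in required received SNR between the residual-CFO
scenario and the zero-CFO scenario strictly decreases with increasing
frequency selectivity `L ≤ N/(2K)`. -/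
theorem stmt13 (N K k t R : ℝ) (hN : 0 < N) (hK : 1 ≤ K) (hk : 1 ≤ k)
    (ht : 0 < t) (hR : 0 < R) (L₁ L₂ : ℝ) (hL₁ : 1 ≤ L₁) (hL₁₂ : L₁ < L₂)
    (hL₂ : L₂ ≤ N / (2 * K)) (htL : t > (k - 1) * L₂)
    (α₁ α₂ : ℝ)
    (hα₁ : α₁ = (t - (k - 1) * L₁) ^ 2 / (2 * (N - K * L₁) * (K * L₁) ^ 2))
    (hα₂ : α₂ = (t - (k - 1) * L₂) ^ 2 / (2 * (N - K * L₂) * (K * L₂) ^ 2))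
    (θ'₁ θ'₂ : ℝ) (hθ'₁ : 0 < θ'₁) (hθ'₂ : 0 < θ'₂)
    (heq₁ : (1 + θ'₁) * (1 - (2 : ℝ) ^ (-R)) = Real.exp (-(α₁ * θ'₁)))
    (heq₂ : (1 + θ'₂) * (1 - (2 : ℝ) ^ (-R)) = Real.exp (-(α₂ * θ'₂)))
    (θ₀ : ℝ) (hθ₀ : θ₀ = 1 / ((2 : ℝ) ^ R - 1)) :
    Real.sqrt (θ₀ / θ'₂) < Real.sqrt (θ₀ / θ'₁) := by
  have hK0 : (0 : ℝ) < K := lt_of_lt_of_le one_pos hK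
  have hk0 : (0 : ℝ) ≤ k - 1 := by linarith
  have ha : (0 : ℝ) < K * L₁ := by nlinarith
  have hab : K * L₁ < K * L₂ := by nlinarith
  have hb2 : K * L₂ ≤ N / 2 := by
    have h := (le_div_iff₀ (by positivity : (0:ℝ) < 2 * K)).mp hL₂
    nlinarith
  -- numerators
  have hn2 : (0 : ℝ) < t - (k - 1) * L₂ := by linarith
  have hn12 : t - (k - 1) * L₂ ≤ t - (k - 1) * L₁ := by nlinarith
  have hnum : (t - (k - 1) * L₂) ^ 2 ≤ (t - (k - 1) * L₁) ^ 2 := by nlinarith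
  -- denominators
  have hNa : 0 < N - K * L₁ := by linarith
  have hNb : 0 < N - K * L₂ := by linarith
  have hd1 : (0 : ℝ) < 2 * (N - K * L₁) * (K * L₁) ^ 2 :=
    mul_pos (by linarith) (pow_pos ha 2)
  have hd2 : (0 : ℝ) < 2 * (N - K * L₂) * (K * L₂) ^ 2 :=
    mul_pos (by linarith) (pow_pos (ha.trans hab) 2)
  have hkey : K * L₁ * (K * L₁) + K * L₁ * (K * L₂) + K * L₂ * (K * L₂)
      < N * (K * L₁ + K * L₂) := aux13 N _ _ ha hab hb2
  have hden : 2 * (N - K * L₁) * (K * L₁) ^ 2 < 2 * (N - K * L₂) * (K * L₂) ^ 2 := by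
    have hring : 2 * (N - K * L₂) * (K * L₂) ^ 2 - 2 * (N - K * L₁) * (K * L₁) ^ 2
        = 2 * ((K * L₂ - K * L₁) * (N * (K * L₁ + K * L₂)
            - (K * L₁ * (K * L₁) + K * L₁ * (K * L₂) + K * L₂ * (K * L₂)))) := by ring
    linarith [mul_pos (sub_pos.mpr hab) (sub_pos.mpr hkey)]
  -- α₂ < α₁ and 0 < α₂
  have hα2pos : 0 < α₂ := by rw [hα₂]; exact div_pos (by positivity) hd2
  have hnum1 : (0:ℝ) < (t - (k - 1) * L₁) ^ 2 := pow_pos (by linarith) 2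
  have hαlt : α₂ < α₁ := by
    rw [hα₁, hα₂]
    calc (t - (k - 1) * L₂) ^ 2 / (2 * (N - K * L₂) * (K * L₂) ^ 2)
        ≤ (t - (k - 1) * L₁) ^ 2 / (2 * (N - K * L₂) * (K * L₂) ^ 2) := by
          gcongr
      _ < (t - (k - 1) * L₁) ^ 2 / (2 * (N - K * L₁) * (K * L₁) ^ 2) :=
          div_lt_div_of_pos_left hnum1 hd1 hden
  have hc : (0 : ℝ) < 1 - (2 : ℝ) ^ (-R) := by
    have : (2 : ℝ) ^ (-R) < 1 :=
      Real.rpow_lt_one_of_one_lt_of_neg one_lt_two (by linarith)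
    linarith
  -- θ'₁ < θ'₂
  have hθlt : θ'₁ < θ'₂ := by
    by_contra h
    push_neg at h
    have h1 : α₂ * θ'₂ < α₁ * θ'₁ :=
      (mul_lt_mul_of_pos_right hαlt hθ'₂).trans_le
        (mul_le_mul_of_nonneg_left h (hα2pos.trans hαlt).le)
    have h2 : Real.exp (-(α₁ * θ'₁)) < Real.exp (-(α₂ * θ'₂)) :=
      Real.exp_lt_exp.mpr (by linarith)
    rw [← heq₁, ← heq₂] at h2
    have := (mul_lt_mul_iff_of_pos_right hc).mp h2
    linarith
  have hθ0 : 0 < θ₀ := by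
    rw [hθ₀]
    have h2R : (1 : ℝ) < (2 : ℝ) ^ R :=
      (Real.one_lt_rpow_iff_of_pos two_pos).mpr (Or.inl ⟨one_lt_two, hR⟩)
    exact one_div_pos.mpr (by linarith)
  have : θ₀ / θ'₂ < θ₀ / θ'₁ := div_lt_div_of_pos_left hθ0 hθ'₁ hθlt
  exact Real.sqrt_lt_sqrt (by positivity) this
end

section
/- Let $M, \gamma, N, K$ be positive reals with $K \geq 1$, and let $L_1, L_2$ be reals with $1 \leq L_1 < L_2 \leq \frac{N}{3K}$. Define $g(L) := \frac{1}{M\gamma (N-KL)^2 K L} + \frac{1}{2 K M \gamma^2 (N-KL)(KL)^2}$. Then $g(L_2) < g(L_1)$. -/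
/-- For fixed received SNR `γ`, the MSE of CFO estimation
`g(L) = 1/(Mγ(N-KL)²KL) + 1/(2KMγ²(N-KL)(KL)²)` strictly decreases with
increasing frequency selectivity `L ≤ N/(3K)`. -/
theorem stmt15 (M γ N K : ℝ) (hM : 0 < M) (hγ : 0 < γ) (hN : 0 < N)
    (hK : 1 ≤ K) (L₁ L₂ : ℝ) (hL₁ : 1 ≤ L₁) (hL₁₂ : L₁ < L₂)
    (hL₂ : L₂ ≤ N / (3 * K))
    (g : ℝ → ℝ)
    (hg : ∀ L : ℝ, g L = 1 / (M * γ * (N - K * L) ^ 2 * K * L)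
      + 1 / (2 * K * M * γ ^ 2 * (N - K * L) * (K * L) ^ 2)) :
    g L₂ < g L₁ := by
  rw [hg, hg]
  have hK0 : (0:ℝ) < K := lt_of_lt_of_le one_pos hK
  set a := K * L₁ with ha_def
  set b := K * L₂ with hb_def
  have ha1 : 1 ≤ a := by nlinarith
  have ha0 : 0 < a := lt_of_lt_of_le one_pos ha1
  have hab : a < b := mul_lt_mul_of_pos_left hL₁₂ hK0
  have hb0 : 0 < b := ha0.trans hab
  have hb3 : 3 * b ≤ N := by
    rw [le_div_iff₀ (by positivity)] at hL₂
    nlinarith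
  have hNb : 0 < N - b := by nlinarith
  have hNa : 0 < N - a := by nlinarith
  have hfac : 0 < (N - a - b) ^ 2 - a * b := by nlinarith
  have h1 : (N - a) ^ 2 * a < (N - b) ^ 2 * b := by
    nlinarith [mul_pos (sub_pos.mpr hab) hfac]
  have h2 : (N - a) * a ^ 2 < (N - b) * b ^ 2 := by
    nlinarith [mul_pos (sub_pos.mpr hab) (show 0 < N * (a + b) - (a^2 + a*b + b^2) by nlinarith)]
  have d1 : M * γ * (N - a) ^ 2 * K * L₁ < M * γ * (N - b) ^ 2 * K * L₂ := by
    have := mul_lt_mul_of_pos_left h1 (mul_pos hM hγ)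
    calc M * γ * (N - a) ^ 2 * K * L₁ = M * γ * ((N - a) ^ 2 * a) := by
          rw [ha_def]; ring
      _ < M * γ * ((N - b) ^ 2 * b) := this
      _ = M * γ * (N - b) ^ 2 * K * L₂ := by rw [hb_def]; ring
  have d2 : 2 * K * M * γ ^ 2 * (N - a) * a ^ 2 < 2 * K * M * γ ^ 2 * (N - b) * b ^ 2 := by
    have := mul_lt_mul_of_pos_left h2 (show (0:ℝ) < 2 * K * M * γ ^ 2 by positivity)
    calc 2 * K * M * γ ^ 2 * (N - a) * a ^ 2 = 2 * K * M * γ ^ 2 * ((N - a) * a ^ 2) := by ring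
      _ < 2 * K * M * γ ^ 2 * ((N - b) * b ^ 2) := this
      _ = 2 * K * M * γ ^ 2 * (N - b) * b ^ 2 := by ring
  have p1 : 0 < M * γ * (N - a) ^ 2 * K * L₁ := by
    have : 0 < L₁ := lt_of_lt_of_le one_pos hL₁
    positivity
  have p2 : 0 < 2 * K * M * γ ^ 2 * (N - a) * a ^ 2 := by positivity
  exact add_lt_add (one_div_lt_one_div_of_lt p1 d1) (one_div_lt_one_div_of_lt p2 d2)
end

section
/- Let $(\Omega, \mathcal{F}, \mu)$ be a probability space, $v \geq 0$ and $u$ reals, $\Delta : \Omega \to \mathbb{R}$ a random variable whose law is the real Gaussian measure with mean $0$ and variance $v$, and $S : \Omega \to \mathbb{R}$ a random variable independent of $\Delta$ with $S^2$ integrable. Then $\int_\Omega \left| S(\omega) e^{i u \Delta(\omega)} \right|^2 d\mu(\omega) \; - \; \left\| \int_\Omega S(\omega) e^{i u \Delta(\omega)} d\mu(\omega) \right\|^2 \; = \; \mathrm{Var}(S) + \left(\int_\Omega S \, d\mu\right)^2 \left(1 - e^{-v u^2}\right). -/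
open MeasureTheory ProbabilityTheory
open Complex Real
open scoped NNReal ENNReal

lemma charGauss (u : ℝ) (v : ℝ≥0) :
    ∫ x : ℝ, Complex.exp (Complex.I * u * x) ∂(gaussianReal 0 v)
      = Complex.exp (-(v * u ^ 2) / 2) := by
  by_cases hv : v = 0
  · subst hv; simp
  · rw [gaussianReal_of_var_ne_zero 0 hv]
    have hmeas : Measurable fun x : ℝ => (gaussianPDFReal 0 v x).toNNReal :=
      (measurable_gaussianPDFReal 0 v).real_toNNReal
    have hpdf : gaussianPDF 0 v = fun x => ((gaussianPDFReal 0 v x).toNNReal : ℝ≥0∞) := rfl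
    rw [hpdf, integral_withDensity_eq_integral_smul hmeas]
    have hv' : (0:ℝ) < v := lt_of_le_of_ne v.2 (by exact_mod_cast (Ne.symm hv))
    have h2v : (0:ℝ) < 2 * π * v := by positivity
    have hb : (0:ℝ) < (2 * (v:ℝ))⁻¹ := by positivity
    have heq : ∀ x : ℝ, ((gaussianPDFReal 0 v x).toNNReal : ℝ≥0) • Complex.exp (Complex.I * u * x)
        = ((Real.sqrt (2 * π * v))⁻¹ : ℂ) *
          (Complex.exp (Complex.I * u * x) * Complex.exp (-(((2 * (v:ℝ))⁻¹ : ℝ) : ℂ) * (x:ℂ) ^ 2)) := by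
      intro x
      rw [NNReal.smul_def, Real.coe_toNNReal _ (gaussianPDFReal_nonneg 0 v x),
        gaussianPDFReal_def]
      simp only [sub_zero]
      rw [Complex.real_smul]
      have harg : (-(((2 * (v:ℝ))⁻¹ : ℝ) : ℂ) * (x:ℂ) ^ 2) = ((-x ^ 2 / (2 * (v:ℝ)) : ℝ) : ℂ) := by
        push_cast; ring
      rw [harg, ← Complex.ofReal_exp]
      push_cast
      ring
    simp_rw [heq]
    rw [integral_const_mul]
    have := fourierIntegral_gaussian (b := (((2 * (v:ℝ))⁻¹ : ℝ) : ℂ)) (by simpa using hb) (u : ℂ)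
    rw [this]
    have hsq : ((π : ℂ) / (((2 * (v:ℝ))⁻¹ : ℝ) : ℂ)) ^ (1/2 : ℂ) = (Real.sqrt (2 * π * v) : ℂ) := by
      have : ((π : ℂ) / (((2 * (v:ℝ))⁻¹ : ℝ) : ℂ)) = ((2 * π * v : ℝ) : ℂ) := by
        push_cast; field_simp
      rw [this, show (1/2 : ℂ) = ((1/2 : ℝ) : ℂ) by norm_num,
        ← Complex.ofReal_cpow h2v.le, Real.sqrt_eq_rpow]
    rw [hsq, ← mul_assoc]
    rw [← Complex.ofReal_inv, ← Complex.ofReal_mul]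
    rw [inv_mul_cancel₀ (by positivity : Real.sqrt (2 * π * v) ≠ 0)]
    rw [Complex.ofReal_one, one_mul]
    congr 1
    push_cast
    field_simp
    ring

lemma splitCS {X : Type*} [MeasurableSpace X] (ν : Measure X) (f θ : X → ℝ)
    (hf : Integrable f ν) (hθ : Measurable θ) :
    ∫ x, (f x : ℂ) * Complex.exp (Complex.I * (θ x : ℂ)) ∂ν
      = ((∫ x, f x * Real.cos (θ x) ∂ν : ℝ) : ℂ)
        + ((∫ x, f x * Real.sin (θ x) ∂ν : ℝ) : ℂ) * Complex.I := by
  have h1 : Integrable (fun x => f x * Real.cos (θ x)) ν := by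
    have := hf.bdd_mul (Real.measurable_cos.comp hθ).aestronglyMeasurable
      (c := 1) (ae_of_all _ fun x => by simpa using Real.abs_cos_le_one (θ x))
    simpa [mul_comm] using this
  have h2 : Integrable (fun x => f x * Real.sin (θ x)) ν := by
    have := hf.bdd_mul (Real.measurable_sin.comp hθ).aestronglyMeasurable
      (c := 1) (ae_of_all _ fun x => by simpa using Real.abs_sin_le_one (θ x))
    simpa [mul_comm] using this
  have hpt : ∀ x, (f x : ℂ) * Complex.exp (Complex.I * (θ x : ℂ))
      = ((f x * Real.cos (θ x) : ℝ) : ℂ) + ((f x * Real.sin (θ x) : ℝ) : ℂ) * Complex.I := by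
    intro x
    rw [mul_comm Complex.I, Complex.exp_mul_I]
    push_cast
    ring
  have h1' : Integrable (fun x => ((f x * Real.cos (θ x) : ℝ) : ℂ)) ν := h1.ofReal
  have h2' : Integrable (fun x => ((f x * Real.sin (θ x) : ℝ) : ℂ) * Complex.I) ν :=
    h2.ofReal.mul_const Complex.I
  simp_rw [hpt]
  have hco : (∫ a, ((f a * Real.cos (θ a) : ℝ) : ℂ) ∂ν)
      = ((∫ x, f x * Real.cos (θ x) ∂ν : ℝ) : ℂ) := integral_ofReal
  have hso : (∫ a, ((f a * Real.sin (θ a) : ℝ) : ℂ) ∂ν)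
      = ((∫ x, f x * Real.sin (θ x) ∂ν : ℝ) : ℂ) := integral_ofReal
  rw [integral_add h1' h2', integral_mul_const, hco, hso]


/-- Variance of the self-interference term in Table I: for `S` (with `S²`
integrable) independent of the Gaussian residual CFO error `Δ ~ N(0, v)`,
`E[|S e^{iuΔ}|²] - |E[S e^{iuΔ}]|² = Var(S) + (E[S])² (1 - e^{-v u²})`. -/
theorem stmt17 {Ω : Type*} [MeasurableSpace Ω] (μ : Measure Ω)
    [IsProbabilityMeasure μ] (v u : ℝ) (hv : 0 ≤ v)
    (Δ S : Ω → ℝ) (hΔ : Measurable Δ) (hSm : Measurable S)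
    (hlaw : μ.map Δ = gaussianReal 0 ⟨v, hv⟩)
    (hS2 : Integrable (fun ω => S ω ^ 2) μ) (hindep : IndepFun S Δ μ) :
    (∫ ω, ‖(S ω : ℂ) * Complex.exp (Complex.I * (u : ℂ) * (Δ ω : ℂ))‖ ^ 2 ∂μ)
      - ‖∫ ω, (S ω : ℂ) * Complex.exp (Complex.I * (u : ℂ) * (Δ ω : ℂ)) ∂μ‖ ^ 2
    = variance S μ + (∫ ω, S ω ∂μ) ^ 2 * (1 - Real.exp (-(v * u ^ 2))) := by
  have hm2 : MemLp S 2 μ := (memLp_two_iff_integrable_sq hSm.aestronglyMeasurable).2 hS2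
  have hSint : Integrable S μ := hm2.integrable (by norm_num)
  set c := ∫ ω, S ω ∂μ with hc
  set E := Real.exp (-(v * u ^ 2) / 2) with hE
  set γ := gaussianReal 0 ⟨v, hv⟩ with hγ
  -- characteristic function of the gaussian, split into cos and sin parts
  have hmulmeas : Measurable fun x : ℝ => u * x := measurable_id.const_mul u
  have hsplitg := splitCS γ (fun _ => 1) (fun x => u * x) (by haveI : IsProbabilityMeasure γ := instIsProbabilityMeasureGaussianReal 0 _; exact integrable_const (1:ℝ)) hmulmeas
  have hchar : ∫ x : ℝ, Complex.exp (Complex.I * ((u * x : ℝ) : ℂ)) ∂γ = ((E : ℝ) : ℂ) := by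
    have := charGauss u ⟨v, hv⟩
    rw [hγ]
    have harg : ∀ x : ℝ, Complex.I * ((u * x : ℝ) : ℂ) = Complex.I * (u : ℂ) * (x : ℂ) := by
      intro x; push_cast; ring
    simp_rw [harg]
    rw [this, hE, Complex.ofReal_exp]
    norm_num
    rfl
  simp only [one_mul, Complex.ofReal_one] at hsplitg
  rw [hchar] at hsplitg
  have hcos_sin : (∫ x : ℝ, Real.cos (u * x) ∂γ) = E ∧ (∫ x : ℝ, Real.sin (u * x) ∂γ) = 0 := by
    have h := hsplitg.symm
    rw [Complex.ext_iff] at h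
    simp at h
    exact h
  -- transfer to μ via the law of Δ
  have hΔcosm : Measurable fun ω => Real.cos (u * Δ ω) :=
    Real.measurable_cos.comp (hΔ.const_mul u)
  have hΔsinm : Measurable fun ω => Real.sin (u * Δ ω) :=
    Real.measurable_sin.comp (hΔ.const_mul u)
  have hcosμ : ∫ ω, Real.cos (u * Δ ω) ∂μ = E := by
    have := integral_map (μ := μ) hΔ.aemeasurable
      (f := fun x => Real.cos (u * x)) (Real.measurable_cos.comp hmulmeas).aestronglyMeasurable
    rw [hlaw] at this
    rw [← this]
    exact hcos_sin.1
  have hsinμ : ∫ ω, Real.sin (u * Δ ω) ∂μ = 0 := by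
    have := integral_map (μ := μ) hΔ.aemeasurable
      (f := fun x => Real.sin (u * x)) (Real.measurable_sin.comp hmulmeas).aestronglyMeasurable
    rw [hlaw] at this
    rw [← this]
    exact hcos_sin.2
  -- independence gives the product formula
  have hcosint : Integrable (fun ω => Real.cos (u * Δ ω)) μ := by
    refine (integrable_const (1 : ℝ)).mono' hΔcosm.aestronglyMeasurable ?_
    exact ae_of_all _ fun ω => by simpa using Real.abs_cos_le_one (u * Δ ω)
  have hsinint : Integrable (fun ω => Real.sin (u * Δ ω)) μ := by
    refine (integrable_const (1 : ℝ)).mono' hΔsinm.aestronglyMeasurable ?_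
    exact ae_of_all _ fun ω => by simpa using Real.abs_sin_le_one (u * Δ ω)
  have hicos : IndepFun S (fun ω => Real.cos (u * Δ ω)) μ :=
    hindep.comp measurable_id (Real.measurable_cos.comp hmulmeas)
  have hisin : IndepFun S (fun ω => Real.sin (u * Δ ω)) μ :=
    hindep.comp measurable_id (Real.measurable_sin.comp hmulmeas)
  have hScos : ∫ ω, S ω * Real.cos (u * Δ ω) ∂μ = c * E := by
    have := hicos.integral_mul_eq_mul_integral hSint.aestronglyMeasurable hcosint.aestronglyMeasurable
    simpa [Pi.mul_apply, hcosμ] using this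
  have hSsin : ∫ ω, S ω * Real.sin (u * Δ ω) ∂μ = 0 := by
    have := hisin.integral_mul_eq_mul_integral hSint.aestronglyMeasurable hsinint.aestronglyMeasurable
    simpa [Pi.mul_apply, hsinμ] using this
  -- compute the second moment integrand
  have hnorm : ∀ ω, ‖(S ω : ℂ) * Complex.exp (Complex.I * (u : ℂ) * (Δ ω : ℂ))‖ ^ 2
      = S ω ^ 2 := by
    intro ω
    rw [norm_mul, mul_pow]
    simp [Complex.norm_exp, Complex.norm_real, _root_.sq_abs]
  -- compute the main integral
  have harg : ∀ ω, Complex.I * (u : ℂ) * ((Δ ω : ℝ) : ℂ) = Complex.I * ((u * Δ ω : ℝ) : ℂ) := by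
    intro ω; push_cast; ring
  have hmain : ∫ ω, (S ω : ℂ) * Complex.exp (Complex.I * (u : ℂ) * (Δ ω : ℂ)) ∂μ
      = ((c * E : ℝ) : ℂ) := by
    simp_rw [harg]
    rw [splitCS μ S (fun ω => u * Δ ω) hSint (hΔ.const_mul u), hScos, hSsin]
    simp
  simp_rw [hnorm]
  rw [hmain]
  have hE2 : E ^ 2 = Real.exp (-(v * u ^ 2)) := by
    rw [hE, sq, ← Real.exp_add]; ring_nf
  have hvar : variance S μ = (∫ ω, S ω ^ 2 ∂μ) - c ^ 2 := by
    have := variance_eq_sub (μ := μ) hm2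
    simpa [Pi.pow_apply, hc] using this
  rw [Complex.norm_real, Real.norm_eq_abs, _root_.sq_abs, hvar]
  rw [mul_pow, hE2]
  ring
end
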